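/- arXiv:2503.03390 — 3 statements merged into one kernel-verified Lean document; each statement's English description precedes it below -/
import Mathlib

section
/- Let f^p ∈ ℝ[x₁, x₂], let h₁, h₂ ∈ ℝ[x₁, x₂] with h₂ ≠ 0, and let f₃(x₁, x₂, x₃) = x₃·h₂(x₁, x₂) − h₁(x₁, x₂). Let N be a positive integer, M > 0, d ∈ ℤ, and let (a_j)_{j∈ℕ} ⊆ ℂ be such that the function r₂(t) := Σ_{j=0}^∞ a_j t^{d−j} is given near infinity (for |t| > M) by this convergent series, f^p(t^N, r₂(t)) = 0 for all |t| > M, and the function t ↦ h₂(t^N, r₂(t)) is not identically zero on {t : |t| > M}. Then there exist M' ≥ M, d' ∈ ℤ and coefficients (b_j)_{j∈ℕ} ⊆ ℂ such that h₂(t^N, r₂(t)) ≠ 0 for all |t| > M', the function r₃(t) := h₁(t^N, r₂(t)) / h₂(t^N, r₂(t)) is given near infinity (for |t| > M') by the convergent series Σ_{j=0}^∞ b_j t^{d'−j}, and for all |t| > M' one has f^p(t^N, r₂(t)) = 0 and f₃(t^N, r₂(t), r₃(t)) = 0; that is, the infinity branch of the plane curve C^p lifts through the lift function h = h₁/h₂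 to an infinity branch of the space curve C defined by f^p and f₃. -/
/-- `g` is given near infinity (for `|t| > M`) by the convergent series
`Σ_{j=0}^∞ c_j t^{d−j}`: for every `t` with `|t| > M` the partial sums of the series
converge to `g t`. -/
def SeriesAt (g : ℂ → ℂ) (M : ℝ) (d : ℤ) (c : ℕ → ℂ) : Prop :=
  ∀ t : ℂ, M < ‖t‖ →
    Filter.Tendsto (fun n => ∑ j ∈ Finset.range n, c j * t ^ (d - (j : ℤ)))
      Filter.atTop (nhds (g t))

open MvPolynomial Filter

noncomputable def Phi3 (r₂ : ℂ → ℂ) (N : ℕ) (q : MvPolynomial (Fin 2) ℝ) : ℂ → ℂ :=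
  fun s => MvPolynomial.aeval ![(s⁻¹) ^ N, r₂ s⁻¹] q

noncomputable def Psi3 (N : ℕ) (d : ℤ) (F : ℂ → ℂ) (q : MvPolynomial (Fin 2) ℝ) : ℂ → ℂ :=
  fun s => MvPolynomial.aeval ![(s⁻¹) ^ N, (s⁻¹) ^ d * F s] q

lemma aux_analyticAt_aeval (q : MvPolynomial (Fin 2) ℝ) {u v : ℂ → ℂ} {s : ℂ}
    (hu : AnalyticAt ℂ u s) (hv : AnalyticAt ℂ v s) :
    AnalyticAt ℂ (fun z => MvPolynomial.aeval ![u z, v z] q) s := by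
  induction q using MvPolynomial.induction_on with
  | C r => simp only [MvPolynomial.aeval_C]; exact analyticAt_const
  | add p q hp hq => simp only [map_add]; exact hp.add hq
  | mul_X p i hp =>
    have hi : AnalyticAt ℂ (fun z => (![u z, v z] : Fin 2 → ℂ) i) s := by
      fin_cases i
      · simpa using hu
      · simpa using hv
    simp only [map_mul, MvPolynomial.aeval_X]
    exact hp.mul hi

lemma aux_merom_aeval (q : MvPolynomial (Fin 2) ℝ) {u v : ℂ → ℂ} {s : ℂ}
    (hu : MeromorphicAt u s) (hv : MeromorphicAt v s) :
    MeromorphicAt (fun z => MvPolynomial.aeval ![u z, v z] q) s := by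
  induction q using MvPolynomial.induction_on with
  | C r => simp only [MvPolynomial.aeval_C]; exact MeromorphicAt.const _ _
  | add p q hp hq => simp only [map_add]; exact hp.add hq
  | mul_X p i hp =>
    have hi : MeromorphicAt (fun z => (![u z, v z] : Fin 2 → ℂ) i) s := by
      fin_cases i
      · simpa using hu
      · simpa using hv
    simp only [map_mul, MvPolynomial.aeval_X]
    exact hp.mul hi

lemma aux_zpow_inv (d : ℤ) {s : ℂ} (hs : s ≠ 0) :
    AnalyticAt ℂ (fun z : ℂ => (z⁻¹) ^ d) s := by
  cases d with
  | ofNat m =>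
    have : (fun z : ℂ => (z⁻¹) ^ (Int.ofNat m)) = fun z : ℂ => (z⁻¹) ^ m := by
      funext z; rw [Int.ofNat_eq_coe, zpow_natCast]
    rw [this]; exact (analyticAt_id.inv hs).pow m
  | negSucc m =>
    have : (fun z : ℂ => (z⁻¹) ^ (Int.negSucc m)) = fun z : ℂ => z ^ (m + 1) := by
      funext z; rw [zpow_negSucc, inv_pow, inv_inv]
    rw [this]; exact analyticAt_id.pow (m + 1)

lemma aux_merom_zpow_inv (d : ℤ) :
    MeromorphicAt (fun z : ℂ => (z⁻¹) ^ d) 0 := by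
  have h := ((MeromorphicAt.id (0:ℂ)).inv).zpow d
  exact h.congr (by filter_upwards with z using rfl)

lemma aux_preconnected (R : ℝ) :
    IsPreconnected {z : ℂ | z ≠ 0 ∧ ‖z‖ < R} := by
  have h2 : (1 : Cardinal) < Module.rank ℝ ℂ := by
    rw [Complex.rank_real_complex]; norm_num
  have hs : IsPreconnected ((fun p : ℝ × ℂ => p.1 • p.2) ''
      (Set.Ioo 0 R ×ˢ Metric.sphere (0 : ℂ) 1)) := by
    apply IsPreconnected.image
    · exact isPreconnected_Ioo.prod
        (isPathConnected_sphere h2 0 zero_le_one).isConnected.isPreconnected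
    · exact (continuous_fst.smul continuous_snd).continuousOn
  convert hs using 1
  ext z
  simp only [Set.mem_setOf_eq, Set.mem_image, Set.mem_prod, Set.mem_Ioo, mem_sphere_iff_norm,
    sub_zero, Prod.exists]
  constructor
  · rintro ⟨hz, hzR⟩
    have habs : (0:ℝ) < ‖z‖ := by
      simpa using hz
    refine ⟨‖z‖, ((‖z‖ : ℝ) : ℂ)⁻¹ * z, ⟨⟨habs, hzR⟩, ?_⟩, ?_⟩
    · rw [norm_mul, norm_inv, Complex.norm_of_nonneg (norm_nonneg z),
        inv_mul_cancel₀ (ne_of_gt habs)]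
    · rw [Complex.real_smul, ← mul_assoc, mul_inv_cancel₀ (by
        simpa [Complex.ofReal_eq_zero] using ne_of_gt habs), one_mul]
  · rintro ⟨r, u, ⟨⟨hr0, hrR⟩, hu⟩, rfl⟩
    have hu0 : u ≠ 0 := by
      intro h; rw [h, norm_zero] at hu; exact one_ne_zero hu.symm
    constructor
    · exact smul_ne_zero (by exact_mod_cast ne_of_gt hr0) hu0
    · rw [Complex.real_smul, norm_mul, Complex.norm_of_nonneg hr0.le,
        hu, mul_one]
      exact hrR

lemma aux_eventually {P : ℂ → Prop} (h : ∀ᶠ z in nhdsWithin 0 {(0:ℂ)}ᶜ, P z) :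
    ∃ ε > 0, ∀ z : ℂ, z ≠ 0 → ‖z‖ < ε → P z := by
  rw [eventually_nhdsWithin_iff, Metric.eventually_nhds_iff] at h
  obtain ⟨ε, hε, h⟩ := h
  refine ⟨ε, hε, fun z hz hlt => h ?_ hz⟩
  simpa [Complex.dist_eq] using hlt

lemma aux_comp_castSucc (x y z : ℂ) :
    (![x, y, z] ∘ (Fin.castSucc : Fin 2 → Fin 3)) = ![x, y] := by
  funext i; fin_cases i <;> rfl

lemma aux_radius {M : ℝ} (hM : 0 < M) {d : ℤ} {a : ℕ → ℂ} {r₂ : ℂ → ℂ}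
    (hr₂ : SeriesAt r₂ M d a) :
    ENNReal.ofReal M⁻¹ ≤ (FormalMultilinearSeries.ofScalars ℂ a).radius := by
  apply ENNReal.le_of_forall_nnreal_lt
  intro r hr
  rcases eq_or_ne r 0 with rfl | hr0
  · simp
  have hrpos : (0:ℝ) < r := lt_of_le_of_ne r.coe_nonneg (by exact_mod_cast (Ne.symm hr0))
  have hrM : (r:ℝ) < M⁻¹ := by
    rw [← ENNReal.ofReal_coe_nnreal] at hr
    exact (ENNReal.ofReal_lt_ofReal_iff (inv_pos.2 hM)).mp hr
  have hMr : M < (r:ℝ)⁻¹ := by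
    rw [← inv_inv M]
    exact inv_strictAnti₀ hrpos hrM
  set t : ℂ := (((r:ℝ)⁻¹ : ℝ) : ℂ) with ht
  have habs : ‖t‖ = (r:ℝ)⁻¹ := by
    rw [ht, Complex.norm_of_nonneg (inv_pos.2 hrpos).le]
  have htM : M < ‖t‖ := by rw [habs]; exact hMr
  have htend := hr₂ t htM
  have hterm : Tendsto (fun j : ℕ => a j * t ^ (d - (j:ℤ))) atTop (nhds 0) := by
    have heq : (fun j : ℕ => a j * t ^ (d - (j:ℤ))) =
        fun n => (∑ j ∈ Finset.range (n+1), a j * t ^ (d - (j:ℤ))) -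
          ∑ j ∈ Finset.range n, a j * t ^ (d - (j:ℤ)) := by
      funext n; rw [Finset.sum_range_succ]; ring
    rw [heq]
    simpa using (htend.comp (tendsto_add_atTop_nat 1)).sub htend
  obtain ⟨C, hC⟩ : BddAbove (Set.range fun j : ℕ => ‖a j * t ^ (d - (j:ℤ))‖) :=
    hterm.norm.bddAbove_range
  apply FormalMultilinearSeries.le_radius_of_bound _ (C * ‖t‖ ^ (-d))
  intro n
  rw [FormalMultilinearSeries.ofScalars_norm]
  have hB : (0:ℝ) < ‖t‖ := lt_trans hM htM
  have h3 : ‖a n‖ * (r:ℝ)^n = ‖a n * t ^ (d - (n:ℤ))‖ * ‖t‖ ^ (-d) := by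
    rw [norm_mul, norm_zpow, mul_assoc]
    rw [← zpow_add₀ (ne_of_gt hB),
      show d - (n:ℤ) + -d = -(n:ℤ) by ring, zpow_neg, zpow_natCast, habs, inv_pow, inv_inv]
  rw [h3]
  exact mul_le_mul_of_nonneg_right (hC ⟨n, rfl⟩) (le_of_lt (by positivity))

lemma aux_hasSumF {M : ℝ} (hM : 0 < M) {d : ℤ} {a : ℕ → ℂ} {r₂ : ℂ → ℂ}
    (hr₂ : SeriesAt r₂ M d a) {s : ℂ} (hs : ‖s‖ < M⁻¹) :
    HasSum (fun j => a j * s ^ j) ((FormalMultilinearSeries.ofScalars ℂ a).sum s) := by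
  set p := FormalMultilinearSeries.ofScalars ℂ a with hp
  have hmem : s ∈ Metric.eball (0:ℂ) p.radius := by
    rw [Metric.mem_eball, edist_dist, Complex.dist_eq, sub_zero]
    refine lt_of_lt_of_le ?_ (aux_radius hM hr₂)
    exact (ENNReal.ofReal_lt_ofReal_iff (inv_pos.2 hM)).mpr hs
  have h := p.hasSum hmem
  refine HasSum.congr_fun h fun j => ?_
  rw [hp, FormalMultilinearSeries.ofScalars_apply_eq, smul_eq_mul]

lemma aux_analyticF {M : ℝ} (hM : 0 < M) {d : ℤ} {a : ℕ → ℂ} {r₂ : ℂ → ℂ}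
    (hr₂ : SeriesAt r₂ M d a) {s : ℂ} (hs : ‖s‖ < M⁻¹) :
    AnalyticAt ℂ (FormalMultilinearSeries.ofScalars ℂ a).sum s := by
  set p := FormalMultilinearSeries.ofScalars ℂ a with hp
  have hrad : (0 : ENNReal) < p.radius :=
    lt_of_lt_of_le (by simp [ENNReal.ofReal_pos, inv_pos.2 hM]) (aux_radius hM hr₂)
  refine (p.hasFPowerSeriesOnBall hrad).analyticAt_of_mem ?_
  rw [Metric.mem_eball, edist_dist, Complex.dist_eq, sub_zero]
  refine lt_of_lt_of_le ?_ (aux_radius hM hr₂)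
  exact (ENNReal.ofReal_lt_ofReal_iff (inv_pos.2 hM)).mpr hs

lemma aux_r₂_eq {M : ℝ} (hM : 0 < M) {d : ℤ} {a : ℕ → ℂ} {r₂ : ℂ → ℂ}
    (hr₂ : SeriesAt r₂ M d a) {t : ℂ} (ht : M < ‖t‖) :
    r₂ t = t ^ d * (FormalMultilinearSeries.ofScalars ℂ a).sum t⁻¹ := by
  have ht0 : t ≠ 0 := by
    intro h; rw [h] at ht; simp at ht; linarith
  have habs : ‖t⁻¹‖ < M⁻¹ := by
    rw [norm_inv]
    exact inv_strictAnti₀ hM ht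
  have hsum := aux_hasSumF hM hr₂ habs
  have h1 : Tendsto (fun n => ∑ j ∈ Finset.range n, a j * t ^ (d - (j:ℤ))) atTop
      (nhds (t ^ d * (FormalMultilinearSeries.ofScalars ℂ a).sum t⁻¹)) := by
    have h2 := (hsum.tendsto_sum_nat).const_mul (t ^ d)
    refine h2.congr fun n => ?_
    rw [Finset.mul_sum]
    refine Finset.sum_congr rfl fun j _ => ?_
    rw [zpow_sub₀ ht0, zpow_natCast, inv_pow]
    ring
  exact tendsto_nhds_unique (hr₂ t ht) h1

/-- An infinity branch `(t^N, r₂(t))` of the plane curve defined by `f^p` lifts, through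
the lift function `h = h₁/h₂`, to an infinity branch `(t^N, r₂(t), r₃(t))` of the space
curve defined by `f^p` and `f₃ = x₃h₂ − h₁`, where `r₃ = h₁(t^N, r₂(t))/h₂(t^N, r₂(t))`
again admits a Puiseux-type series expansion at infinity. -/
theorem stmt_3 (fp h₁ h₂ : MvPolynomial (Fin 2) ℝ) (hh₂ : h₂ ≠ 0)
    (f₃ : MvPolynomial (Fin 3) ℝ)
    (hf₃ : f₃ = MvPolynomial.X 2 * MvPolynomial.rename Fin.castSucc h₂ -
      MvPolynomial.rename Fin.castSucc h₁)
    (N : ℕ) (hN : 0 < N) (M : ℝ) (hM : 0 < M) (d : ℤ) (a : ℕ → ℂ) (r₂ : ℂ → ℂ)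
    (hr₂ : SeriesAt r₂ M d a)
    (hfp : ∀ t : ℂ, M < ‖t‖ → MvPolynomial.aeval ![t ^ N, r₂ t] fp = 0)
    (hne : ¬ ∀ t : ℂ, M < ‖t‖ → MvPolynomial.aeval ![t ^ N, r₂ t] h₂ = 0) :
    ∃ M' : ℝ, M ≤ M' ∧ ∃ d' : ℤ, ∃ b : ℕ → ℂ,
      (∀ t : ℂ, M' < ‖t‖ → MvPolynomial.aeval ![t ^ N, r₂ t] h₂ ≠ 0) ∧
      SeriesAt
        (fun t => MvPolynomial.aeval ![t ^ N, r₂ t] h₁ / MvPolynomial.aeval ![t ^ N, r₂ t] h₂)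
        M' d' b ∧
      (∀ t : ℂ, M' < ‖t‖ →
        MvPolynomial.aeval ![t ^ N, r₂ t] fp = 0 ∧
        MvPolynomial.aeval
          ![t ^ N, r₂ t,
            MvPolynomial.aeval ![t ^ N, r₂ t] h₁ / MvPolynomial.aeval ![t ^ N, r₂ t] h₂]
          f₃ = 0) := by
  classical
  set F := (FormalMultilinearSeries.ofScalars ℂ a).sum with hF
  set U : Set ℂ := {z : ℂ | z ≠ 0 ∧ ‖z‖ < M⁻¹} with hU
  have hUopen : IsOpen U := by
    have : U = {z : ℂ | z ≠ 0} ∩ {z : ℂ | ‖z‖ < M⁻¹} := rfl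
    rw [this]
    exact isOpen_ne.inter (isOpen_lt continuous_norm continuous_const)
  -- basic conversions
  have hPhiInv : ∀ (q : MvPolynomial (Fin 2) ℝ) (t : ℂ),
      MvPolynomial.aeval ![t ^ N, r₂ t] q = Phi3 r₂ N q t⁻¹ := by
    intro q t; simp only [Phi3, inv_inv]
  have habs_inv : ∀ z ∈ U, M < ‖z⁻¹‖ := by
    intro z hz
    rw [norm_inv, ← inv_inv M]
    exact inv_strictAnti₀ (norm_pos_iff.mpr hz.1) hz.2
  have hmemU : ∀ t : ℂ, M < ‖t‖ → t⁻¹ ∈ U := by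
    intro t ht
    have ht0 : t ≠ 0 := by
      intro h; rw [h] at ht; simp at ht; linarith
    refine ⟨inv_ne_zero ht0, ?_⟩
    rw [norm_inv]
    exact inv_strictAnti₀ hM ht
  -- Psi analytic on U
  have hΨan : ∀ (q : MvPolynomial (Fin 2) ℝ), ∀ s ∈ U, AnalyticAt ℂ (Psi3 N d F q) s := by
    intro q s hs
    exact aux_analyticAt_aeval q ((analyticAt_id.inv hs.1).pow N)
      ((aux_zpow_inv d hs.1).mul (aux_analyticF hM hr₂ hs.2))
  -- Phi = Psi on U
  have hΦΨ : ∀ (q : MvPolynomial (Fin 2) ℝ), ∀ s ∈ U, Phi3 r₂ N q s = Psi3 N d F q s := by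
    intro q s hs
    have h2 : r₂ s⁻¹ = (s⁻¹) ^ d * F s := by
      rw [aux_r₂_eq hM hr₂ (habs_inv s hs), inv_inv]
    simp only [Phi3, Psi3, h2]
  -- Phi meromorphic at 0
  have hUnhds : ∀ᶠ z in nhdsWithin (0:ℂ) {(0:ℂ)}ᶜ, z ∈ U := by
    rw [eventually_nhdsWithin_iff]
    have h1 : ∀ᶠ z in nhds (0:ℂ), ‖z‖ < M⁻¹ := by
      filter_upwards [Metric.ball_mem_nhds (0:ℂ) (inv_pos.2 hM)] with z hz
      simpa [Complex.dist_eq] using hz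
    filter_upwards [h1] with z hz hz0
    exact ⟨hz0, hz⟩
  have hΦmer : ∀ q : MvPolynomial (Fin 2) ℝ, MeromorphicAt (Phi3 r₂ N q) 0 := by
    intro q
    have hF0 : ‖(0:ℂ)‖ < M⁻¹ := by simp [inv_pos.2 hM]
    have hv : MeromorphicAt (fun z : ℂ => (z⁻¹) ^ d * F z) 0 :=
      (aux_merom_zpow_inv d).mul (aux_analyticF hM hr₂ hF0).meromorphicAt
    have hv' : MeromorphicAt (fun z : ℂ => r₂ z⁻¹) 0 := by
      apply hv.congr
      filter_upwards [hUnhds] with z hz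
      rw [aux_r₂_eq hM hr₂ (habs_inv z hz), inv_inv]
    have hu : MeromorphicAt (fun z : ℂ => (z⁻¹) ^ N) 0 := by
      have h := ((MeromorphicAt.id (0:ℂ)).inv).pow N
      exact h.congr (by filter_upwards with z using rfl)
    exact aux_merom_aeval q hu hv'
  have hH2mer := hΦmer h₂
  rcases eq_or_ne (meromorphicOrderAt (Phi3 r₂ N h₂) 0) ⊤ with htop | hne2
  · -- h₂ identically zero near 0 : contradiction via identity theorem
    exfalso
    push_neg at hne
    obtain ⟨t₀, ht₀M, ht₀⟩ := hne
    obtain ⟨ε, hε, hzero⟩ := aux_eventually (meromorphicOrderAt_eq_top_iff.mp htop)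
    set δ := min ε M⁻¹ with hδ
    have hδpos : 0 < δ := lt_min hε (inv_pos.2 hM)
    set z₀ : ℂ := ((δ/2 : ℝ) : ℂ) with hz₀
    have hz₀ne : z₀ ≠ 0 := by
      rw [hz₀]; exact_mod_cast ne_of_gt (by linarith)
    have hz₀abs : ‖z₀‖ = δ/2 := by
      rw [hz₀, Complex.norm_of_nonneg (by linarith)]
    have hz₀U : z₀ ∈ U := by
      refine ⟨hz₀ne, ?_⟩
      rw [hz₀abs]
      exact lt_of_lt_of_le (by linarith) (min_le_right ε M⁻¹)
    have hev : Psi3 N d F h₂ =ᶠ[nhds z₀] 0 := by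
      have hopen : IsOpen {z : ℂ | z ≠ 0 ∧ ‖z‖ < δ} := by
        have : {z : ℂ | z ≠ 0 ∧ ‖z‖ < δ}
            = {z : ℂ | z ≠ 0} ∩ {z : ℂ | ‖z‖ < δ} := rfl
        rw [this]
        exact isOpen_ne.inter (isOpen_lt continuous_norm continuous_const)
      apply Filter.eventuallyEq_of_mem
        (hopen.mem_nhds ⟨hz₀ne, by rw [hz₀abs]; linarith⟩)
      intro z hz
      have hzU : z ∈ U := ⟨hz.1, lt_of_lt_of_le hz.2 (min_le_right _ _)⟩
      show Psi3 N d F h₂ z = 0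
      rw [← hΦΨ h₂ z hzU]
      exact hzero z hz.1 (lt_of_lt_of_le hz.2 (min_le_left _ _))
    have hAOn : AnalyticOnNhd ℂ (Psi3 N d F h₂) U := fun s hs => hΨan h₂ s hs
    have hEq := hAOn.eqOn_zero_of_preconnected_of_eventuallyEq_zero
      (aux_preconnected M⁻¹) hz₀U hev
    have hs₀U : t₀⁻¹ ∈ U := hmemU t₀ ht₀M
    have h0 : Psi3 N d F h₂ t₀⁻¹ = 0 := hEq hs₀U
    rw [← hΦΨ h₂ _ hs₀U, ← hPhiInv h₂ t₀] at h0
    exact ht₀ h0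
  · -- h₂ has finite order: eventually nonzero
    obtain ⟨n2, hn2⟩ := WithTop.ne_top_iff_exists.mp hne2
    obtain ⟨g₂, hg₂an, hg₂0, hg₂eq⟩ := (meromorphicOrderAt_eq_int_iff hH2mer).mp hn2.symm
    have hH2ne : ∀ᶠ z in nhdsWithin (0:ℂ) {(0:ℂ)}ᶜ, Phi3 r₂ N h₂ z ≠ 0 := by
      have hg2ne : ∀ᶠ z in nhds (0:ℂ), g₂ z ≠ 0 := hg₂an.continuousAt.eventually_ne hg₂0
      filter_upwards [hg₂eq, eventually_nhdsWithin_of_eventually_nhds hg2ne,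
        self_mem_nhdsWithin] with z hz1 hz2 hz3
      rw [hz1]
      simp only [sub_zero, smul_eq_mul]
      exact mul_ne_zero (zpow_ne_zero _ hz3) hz2
    have hratmer : MeromorphicAt (fun s => Phi3 r₂ N h₁ s / Phi3 r₂ N h₂ s) 0 :=
      (hΦmer h₁).div (hΦmer h₂)
    -- a helper for the final membership/absolute-value juggling
    have hts : ∀ ε : ℝ, 0 < ε → ∀ t : ℂ, max M ε⁻¹ < ‖t‖ →
        (t ≠ 0 ∧ t⁻¹ ≠ 0 ∧ ‖t⁻¹‖ < ε ∧ M < ‖t‖) := by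
      intro ε hε t ht
      have htM : M < ‖t‖ := lt_of_le_of_lt (le_max_left _ _) ht
      have ht0 : t ≠ 0 := by
        intro h; rw [h] at htM; simp at htM; linarith
      refine ⟨ht0, inv_ne_zero ht0, ?_, htM⟩
      rw [norm_inv, ← inv_inv ε]
      exact inv_strictAnti₀ (inv_pos.2 hε) (lt_of_le_of_lt (le_max_right _ _) ht)
    -- f₃ evaluation lemma
    have hf₃eval : ∀ t : ℂ, MvPolynomial.aeval ![t ^ N, r₂ t] h₂ ≠ 0 →
        MvPolynomial.aeval
          ![t ^ N, r₂ t,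
            MvPolynomial.aeval ![t ^ N, r₂ t] h₁ / MvPolynomial.aeval ![t ^ N, r₂ t] h₂]
          f₃ = 0 := by
      intro t hB2
      rw [hf₃, map_sub, map_mul, MvPolynomial.aeval_X, MvPolynomial.aeval_rename,
        MvPolynomial.aeval_rename, aux_comp_castSucc]
      have h5 : (![t ^ N, r₂ t,
          MvPolynomial.aeval ![t ^ N, r₂ t] h₁ / MvPolynomial.aeval ![t ^ N, r₂ t] h₂] :
          Fin 3 → ℂ) 2
          = MvPolynomial.aeval ![t ^ N, r₂ t] h₁ / MvPolynomial.aeval ![t ^ N, r₂ t] h₂ := rfl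
      rw [h5, div_mul_cancel₀ _ hB2, sub_self]
    rcases eq_or_ne (meromorphicOrderAt (fun s => Phi3 r₂ N h₁ s / Phi3 r₂ N h₂ s) 0) ⊤ with hrtop | hrne
    · -- ratio identically zero near 0
      obtain ⟨ε, hε, hgood⟩ := aux_eventually (hH2ne.and (meromorphicOrderAt_eq_top_iff.mp hrtop))
      refine ⟨max M ε⁻¹, le_max_left _ _, 0, fun _ => 0, ?_, ?_, ?_⟩
      · intro t ht
        obtain ⟨ht0, hs0, hsε, htM⟩ := hts ε hε t ht
        rw [hPhiInv h₂ t]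
        exact (hgood t⁻¹ hs0 hsε).1
      · intro t ht
        obtain ⟨ht0, hs0, hsε, htM⟩ := hts ε hε t ht
        have hval : MvPolynomial.aeval ![t ^ N, r₂ t] h₁
            / MvPolynomial.aeval ![t ^ N, r₂ t] h₂ = 0 := by
          rw [hPhiInv h₁ t, hPhiInv h₂ t]
          exact (hgood t⁻¹ hs0 hsε).2
        simp only [zero_mul, Finset.sum_const_zero, hval]
        exact tendsto_const_nhds
      · intro t ht
        obtain ⟨ht0, hs0, hsε, htM⟩ := hts ε hε t ht
        have hB2 : MvPolynomial.aeval ![t ^ N, r₂ t] h₂ ≠ 0 := by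
          rw [hPhiInv h₂ t]; exact (hgood t⁻¹ hs0 hsε).1
        exact ⟨hfp t htM, hf₃eval t hB2⟩
    · -- ratio has finite order m
      obtain ⟨m, hm⟩ := WithTop.ne_top_iff_exists.mp hrne
      obtain ⟨g, hgan, hg0, hgeq⟩ := (meromorphicOrderAt_eq_int_iff hratmer).mp hm.symm
      obtain ⟨pw, hpw⟩ := hgan
      rw [hasFPowerSeriesAt_iff] at hpw
      obtain ⟨ε, hε, hgood⟩ := aux_eventually
        ((hH2ne.and hgeq).and (eventually_nhdsWithin_of_eventually_nhds hpw))
      refine ⟨max M ε⁻¹, le_max_left _ _, -m, pw.coeff, ?_, ?_, ?_⟩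
      · intro t ht
        obtain ⟨ht0, hs0, hsε, htM⟩ := hts ε hε t ht
        rw [hPhiInv h₂ t]
        exact (hgood t⁻¹ hs0 hsε).1.1
      · intro t ht
        obtain ⟨ht0, hs0, hsε, htM⟩ := hts ε hε t ht
        obtain ⟨⟨hB2, hrat⟩, hsum⟩ := hgood t⁻¹ hs0 hsε
        rw [zero_add] at hsum
        have hsum' : HasSum (fun k => (t⁻¹) ^ k * pw.coeff k) (g t⁻¹) := by
          refine hsum.congr_fun fun k => ?_
          rw [smul_eq_mul]
        have htend := hsum'.tendsto_sum_nat.const_mul (t ^ (-m))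
        have heq2 : ∀ n : ℕ,
            t ^ (-m) * (∑ j ∈ Finset.range n, (t⁻¹) ^ j * pw.coeff j)
            = ∑ j ∈ Finset.range n, pw.coeff j * t ^ (-m - (j:ℤ)) := by
          intro n
          rw [Finset.mul_sum]
          refine Finset.sum_congr rfl fun j _ => ?_
          rw [show -m - (j:ℤ) = -m + -(j:ℤ) by ring, zpow_add₀ ht0]
          simp only [zpow_neg, zpow_natCast, inv_pow]
          ring
        have hval : MvPolynomial.aeval ![t ^ N, r₂ t] h₁
            / MvPolynomial.aeval ![t ^ N, r₂ t] h₂ = t ^ (-m) * g t⁻¹ := by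
          rw [hPhiInv h₁ t, hPhiInv h₂ t]
          have : Phi3 r₂ N h₁ t⁻¹ / Phi3 r₂ N h₂ t⁻¹ = (t⁻¹ - 0) ^ m • g t⁻¹ := hrat
          rw [this, sub_zero, smul_eq_mul, inv_zpow, ← zpow_neg]
        have hval' : (fun t : ℂ => MvPolynomial.aeval ![t ^ N, r₂ t] h₁
            / MvPolynomial.aeval ![t ^ N, r₂ t] h₂) t = t ^ (-m) * g t⁻¹ := hval
        rw [hval']
        exact (htend.congr heq2)
      · intro t ht
        obtain ⟨ht0, hs0, hsε, htM⟩ := hts ε hε t ht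
        have hB2 : MvPolynomial.aeval ![t ^ N, r₂ t] h₂ ≠ 0 := by
          rw [hPhiInv h₂ t]; exact (hgood t⁻¹ hs0 hsε).1.1
        exact ⟨hfp t htM, hf₃eval t hB2⟩
end

section
/- Let n₂, n₃ be positive integers, n := lcm(n₂, n₃) and υ_k := n / n_k for k = 2, 3. For k = 2, 3 let ℓ_k ∈ ℕ, let 0 < n_{1,k} < n_{2,k} < ⋯ < n_{ℓ_k,k} ≤ n_k be integers with gcd(n_k, n_{1,k}, …, n_{ℓ_k,k}) = 1, let m_k ∈ ℂ, and let a_{1,k}, …, a_{ℓ_k,k} be nonzero complex numbers. Define the polynomials q_k(X) = m_k X^n + Σ_{j=1}^{ℓ_k} a_{j,k} X^{υ_k(n_k − n_{j,k})} ∈ ℂ[X]. Then, in the field ℂ(X) of rational functions over ℂ, the element X belongs to the subfield generated over ℂ by X^n, q₂(X) and q₃(X). (Equivalently, the polynomial parametrization Q̃(t) = (t^n, q₂(t), q₃(t)) of the asymptote is proper, i.e., birational onto its image.) -/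
open Polynomial in
lemma aux_root_of_unity {K : Type*} [Field K] [Algebra ℂ K] {n : ℕ} (hn : n ≠ 0)
    {u : K} (hu : u ^ n = 1) : ∃ ζ : ℂ, ζ ^ n = 1 ∧ u = algebraMap ℂ K ζ := by
  set P : Polynomial ℂ := X ^ n - C 1 with hP
  have hmon : P.Monic := monic_X_pow_sub_C 1 hn
  have hsplit : P.Splits := IsAlgClosed.splits P
  have h0 : Polynomial.aeval u P = 0 := by simp [hP, hu]
  rw [hsplit.eq_prod_roots_of_monic hmon] at h0
  rw [map_multiset_prod, Multiset.map_map] at h0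
  obtain ⟨r, hr, hr0⟩ := Multiset.mem_map.mp (Multiset.prod_eq_zero_iff.mp h0)
  refine ⟨r, ?_, ?_⟩
  · have h1 := isRoot_of_mem_roots hr
    have h2 : r ^ n - 1 = 0 := by simpa [hP, Polynomial.IsRoot] using h1
    exact sub_eq_zero.mp h2
  · have : u - algebraMap ℂ K r = 0 := by simpa using hr0
    exact sub_eq_zero.mp this

lemma aux_lcm_div_coprime (n₂ n₃ : ℕ) (h₂ : 0 < n₂) (h₃ : 0 < n₃) :
    Nat.gcd (Nat.lcm n₂ n₃ / n₂) (Nat.lcm n₂ n₃ / n₃) = 1 := by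
  set g := Nat.gcd n₂ n₃ with hg
  have hgpos : 0 < g := Nat.gcd_pos_of_pos_left _ h₂
  have hd3 : g ∣ n₃ := Nat.gcd_dvd_right _ _
  have hd2 : g ∣ n₂ := Nat.gcd_dvd_left _ _
  have h1 : Nat.lcm n₂ n₃ = n₂ * (n₃ / g) := by
    refine Nat.eq_of_mul_eq_mul_left hgpos ?_
    rw [Nat.gcd_mul_lcm, show g * (n₂ * (n₃ / g)) = n₂ * (g * (n₃ / g)) by ring,
      Nat.mul_div_cancel' hd3]
  have h2 : Nat.lcm n₂ n₃ = n₃ * (n₂ / g) := by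
    refine Nat.eq_of_mul_eq_mul_left hgpos ?_
    rw [Nat.gcd_mul_lcm, show g * (n₃ * (n₂ / g)) = n₃ * (g * (n₂ / g)) by ring,
      Nat.mul_div_cancel' hd2, Nat.mul_comm]
  rw [show Nat.lcm n₂ n₃ / n₃ = n₂ / g from by rw [h2, Nat.mul_div_cancel_left _ h₃],
    show Nat.lcm n₂ n₃ / n₂ = n₃ / g from by rw [h1, Nat.mul_div_cancel_left _ h₂],
    Nat.gcd_comm]
  exact Nat.coprime_div_gcd_div_gcd hgpos

open Polynomial in
lemma aux_order_dvd (nk : ℕ) (hnk : 0 < nk) (n υ : ℕ) (hdvd : nk ∣ n) (hnpos : 0 < n)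
    (hυ : υ = n / nk)
    (ℓ : ℕ) (e : Fin ℓ → ℕ) (hmono : StrictMono e) (hpos : ∀ j, 0 < e j) (hle : ∀ j, e j ≤ nk)
    (hgcd : Nat.gcd nk (Finset.univ.gcd e) = 1)
    (m : ℂ) (a : Fin ℓ → ℂ) (ha : ∀ j, a j ≠ 0)
    (q : Polynomial ℂ)
    (hq : q = C m * X ^ n + ∑ j : Fin ℓ, C (a j) * X ^ (υ * (nk - e j)))
    (ζ : ℂ) (hζ : ζ ^ n = 1)
    (heq : Polynomial.aeval (algebraMap ℂ (RatFunc ℂ) ζ * RatFunc.X) q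
      = algebraMap (Polynomial ℂ) (RatFunc ℂ) q) :
    orderOf ζ ∣ υ := by
  have hυnk : υ * nk = n := by rw [hυ]; exact Nat.div_mul_cancel hdvd
  have hυpos : 0 < υ := by
    rw [hυ]; exact Nat.div_pos (Nat.le_of_dvd hnpos hdvd) hnk
  set d : Fin ℓ → ℕ := fun j => υ * (nk - e j) with hd
  have hdlt : ∀ j, d j < n := by
    intro j
    have h1 : nk - e j < nk := by have := hpos j; omega
    calc d j < υ * nk := mul_lt_mul_of_pos_left h1 hυpos
    _ = n := hυnk
  have hdinj : Function.Injective d := by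
    intro j j' h
    have h' : nk - e j = nk - e j' := Nat.eq_of_mul_eq_mul_left hυpos h
    have h1 := hle j; have h2 := hle j'
    exact hmono.injective (by omega)
  have gcomp : ∀ r : Polynomial ℂ, algebraMap (Polynomial ℂ) (RatFunc ℂ) (q.comp r)
      = Polynomial.aeval (algebraMap (Polynomial ℂ) (RatFunc ℂ) r) q := by
    intro r
    rw [comp_eq_aeval]
    exact (aeval_algHom_apply (IsScalarTower.toAlgHom ℂ (Polynomial ℂ) (RatFunc ℂ)) r q).symm
  have hCζ : algebraMap (Polynomial ℂ) (RatFunc ℂ) (C ζ) = algebraMap ℂ (RatFunc ℂ) ζ := by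
    rw [IsScalarTower.algebraMap_apply ℂ (Polynomial ℂ) (RatFunc ℂ), Polynomial.algebraMap_eq]
  have key : q.comp (C ζ * X) = q := by
    apply RatFunc.algebraMap_injective ℂ
    rw [gcomp, map_mul, hCζ, RatFunc.algebraMap_X]
    exact heq
  rw [hq] at key
  have hcompval : (C m * X ^ n + ∑ j : Fin ℓ, C (a j) * X ^ (d j)).comp (C ζ * X)
      = C m * X ^ n + ∑ j : Fin ℓ, C (a j * ζ ^ (d j)) * X ^ (d j) := by
    simp only [add_comp, sum_comp, mul_comp, C_comp, pow_comp, X_comp, mul_pow, ← map_pow, hζ,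
      map_one, map_mul]
    rw [one_mul]
    congr 1
    apply Finset.sum_congr rfl
    intro x _
    show _ = C (a x) * C (ζ ^ (υ * (nk - e x))) * X ^ (υ * (nk - e x))
    ring
  rw [hcompval] at key
  have hcoeffsum : ∀ (b : Fin ℓ → ℂ) (j₀ : Fin ℓ),
      (∑ j : Fin ℓ, C (b j) * X ^ (d j)).coeff (d j₀) = b j₀ := by
    intro b j₀
    rw [finset_sum_coeff, Finset.sum_eq_single j₀]
    · simp [coeff_C_mul, coeff_X_pow]
    · intro j _ hj
      simp only [coeff_C_mul, coeff_X_pow]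
      rw [if_neg (fun h => hj (hdinj h).symm), mul_zero]
    · intro h; exact absurd (Finset.mem_univ j₀) h
  have hζd : ∀ j, ζ ^ (d j) = 1 := by
    intro j₀
    have h1 := congrArg (fun P => Polynomial.coeff P (d j₀)) key
    simp only [coeff_add] at h1
    rw [hcoeffsum (fun j => a j * ζ ^ (d j)) j₀, hcoeffsum a j₀] at h1
    have hz0 : (C m * X ^ n).coeff (d j₀) = 0 := by
      rw [coeff_C_mul, coeff_X_pow, if_neg (Nat.ne_of_lt (hdlt j₀)), mul_zero]
    rw [hz0] at h1
    simp only [zero_add] at h1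
    exact mul_left_cancel₀ (ha j₀) (by rw [h1, mul_one])
  have hζe : ∀ j, ζ ^ (υ * e j) = 1 := by
    intro j
    have hsum : υ * e j + d j = n := by
      show υ * e j + υ * (nk - e j) = n
      rw [← Nat.mul_add, Nat.add_sub_cancel' (hle j), hυnk]
    calc ζ ^ (υ * e j) = ζ ^ (υ * e j) * ζ ^ (d j) := by rw [hζd j, mul_one]
    _ = ζ ^ (υ * e j + d j) := (pow_add ζ _ _).symm
    _ = 1 := by rw [hsum, hζ]
  have h2 : orderOf ζ ∣ υ * nk := by rw [hυnk]; exact orderOf_dvd_iff_pow_eq_one.2 hζ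
  have h3 : orderOf ζ ∣ υ * Finset.univ.gcd e := by
    have h4 : orderOf ζ ∣ Finset.univ.gcd (fun j => υ * e j) :=
      Finset.dvd_gcd (fun j _ => orderOf_dvd_iff_pow_eq_one.2 (hζe j))
    rwa [Finset.gcd_mul_left, normalize_eq] at h4
  have h5 := Nat.dvd_gcd h2 h3
  rwa [Nat.gcd_mul_left, hgcd, mul_one] at h5

set_option maxHeartbeats 1000000 in
set_option synthInstance.maxHeartbeats 400000 in
/-- Properness of the parametrization `Q̃(t) = (t^n, q₂(t), q₃(t))` of the asymptote:
in the field of rational functions `ℂ(X)`, the element `X` belongs to the subfield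
generated over `ℂ` by `X^n`, `q₂(X)` and `q₃(X)`, where
`q_k(X) = m_k X^n + Σ_{j=1}^{ℓ_k} a_{j,k} X^{υ_k(n_k − n_{j,k})}`,
`n = lcm(n₂, n₃)`, `υ_k = n/n_k`, the exponents `0 < n_{1,k} < ⋯ < n_{ℓ_k,k} ≤ n_k`
satisfy `gcd(n_k, n_{1,k}, …, n_{ℓ_k,k}) = 1`, and the `a_{j,k}` are nonzero. -/
theorem stmt_8 (n₂ n₃ : ℕ) (hn₂ : 0 < n₂) (hn₃ : 0 < n₃)
    (n υ₂ υ₃ : ℕ) (hn : n = Nat.lcm n₂ n₃) (hυ₂ : υ₂ = n / n₂) (hυ₃ : υ₃ = n / n₃)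
    (ℓ₂ ℓ₃ : ℕ) (e₂ : Fin ℓ₂ → ℕ) (e₃ : Fin ℓ₃ → ℕ)
    (he₂mono : StrictMono e₂) (he₃mono : StrictMono e₃)
    (he₂pos : ∀ j, 0 < e₂ j) (he₃pos : ∀ j, 0 < e₃ j)
    (he₂le : ∀ j, e₂ j ≤ n₂) (he₃le : ∀ j, e₃ j ≤ n₃)
    (hgcd₂ : Nat.gcd n₂ (Finset.univ.gcd e₂) = 1)
    (hgcd₃ : Nat.gcd n₃ (Finset.univ.gcd e₃) = 1)
    (m₂ m₃ : ℂ) (a₂ : Fin ℓ₂ → ℂ) (a₃ : Fin ℓ₃ → ℂ)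
    (ha₂ : ∀ j, a₂ j ≠ 0) (ha₃ : ∀ j, a₃ j ≠ 0)
    (q₂ q₃ : Polynomial ℂ)
    (hq₂ : q₂ = Polynomial.C m₂ * Polynomial.X ^ n +
      ∑ j : Fin ℓ₂, Polynomial.C (a₂ j) * Polynomial.X ^ (υ₂ * (n₂ - e₂ j)))
    (hq₃ : q₃ = Polynomial.C m₃ * Polynomial.X ^ n +
      ∑ j : Fin ℓ₃, Polynomial.C (a₃ j) * Polynomial.X ^ (υ₃ * (n₃ - e₃ j))) :
    (RatFunc.X : RatFunc ℂ) ∈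
      IntermediateField.adjoin ℂ
        {(RatFunc.X : RatFunc ℂ) ^ n,
          algebraMap (Polynomial ℂ) (RatFunc ℂ) q₂,
          algebraMap (Polynomial ℂ) (RatFunc ℂ) q₃} := by
  classical
  set F := IntermediateField.adjoin ℂ {(RatFunc.X : RatFunc ℂ) ^ n,
          algebraMap (Polynomial ℂ) (RatFunc ℂ) q₂,
          algebraMap (Polynomial ℂ) (RatFunc ℂ) q₃} with hF
  have hnpos : 0 < n := by
    rw [hn]; exact Nat.pos_of_ne_zero (Nat.lcm_ne_zero hn₂.ne' hn₃.ne')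
  have hdvd2 : n₂ ∣ n := hn ▸ Nat.dvd_lcm_left _ _
  have hdvd3 : n₃ ∣ n := hn ▸ Nat.dvd_lcm_right _ _
  have hXnF : (RatFunc.X : RatFunc ℂ) ^ n ∈ F :=
    IntermediateField.subset_adjoin ℂ _ (Set.mem_insert _ _)
  have hq2F : algebraMap (Polynomial ℂ) (RatFunc ℂ) q₂ ∈ F :=
    IntermediateField.subset_adjoin ℂ _ (Set.mem_insert_of_mem _ (Set.mem_insert _ _))
  have hq3F : algebraMap (Polynomial ℂ) (RatFunc ℂ) q₃ ∈ F :=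
    IntermediateField.subset_adjoin ℂ _
      (Set.mem_insert_of_mem _ (Set.mem_insert_of_mem _ rfl))
  set x₀ : F := ⟨(RatFunc.X : RatFunc ℂ) ^ n, hXnF⟩ with hx₀
  set y₂ : F := ⟨algebraMap (Polynomial ℂ) (RatFunc ℂ) q₂, hq2F⟩ with hy₂
  set y₃ : F := ⟨algebraMap (Polynomial ℂ) (RatFunc ℂ) q₃, hq3F⟩ with hy₃
  have haevalX : ∀ p : Polynomial ℂ, Polynomial.aeval (RatFunc.X : RatFunc ℂ) p
      = algebraMap (Polynomial ℂ) (RatFunc ℂ) p := by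
    intro p
    have h := Polynomial.aeval_algHom_apply
      (IsScalarTower.toAlgHom ℂ (Polynomial ℂ) (RatFunc ℂ)) Polynomial.X p
    simpa [RatFunc.algebraMap_X] using h
  set Pn : Polynomial F := Polynomial.X ^ n - Polynomial.C x₀ with hPn
  have hPnmonic : Pn.Monic := Polynomial.monic_X_pow_sub_C x₀ hnpos.ne'
  have haevalPn : Polynomial.aeval (RatFunc.X : RatFunc ℂ) Pn = 0 := by
    rw [hPn]
    simp only [map_sub, map_pow, Polynomial.aeval_X, Polynomial.aeval_C,
      IntermediateField.algebraMap_apply]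
    exact sub_self _
  have hint : IsIntegral F (RatFunc.X : RatFunc ℂ) :=
    ⟨Pn, hPnmonic, by rwa [← Polynomial.aeval_def]⟩
  have hpdvdPn : minpoly F (RatFunc.X : RatFunc ℂ) ∣ Pn := minpoly.dvd F _ haevalPn
  set P₂ : Polynomial F := q₂.map (algebraMap ℂ F) - Polynomial.C y₂ with hP₂
  set P₃ : Polynomial F := q₃.map (algebraMap ℂ F) - Polynomial.C y₃ with hP₃
  have haevalP₂ : Polynomial.aeval (RatFunc.X : RatFunc ℂ) P₂ = 0 := by
    rw [hP₂, map_sub, Polynomial.aeval_map_algebraMap, Polynomial.aeval_C,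
      IntermediateField.algebraMap_apply, haevalX q₂]
    exact sub_self _
  have haevalP₃ : Polynomial.aeval (RatFunc.X : RatFunc ℂ) P₃ = 0 := by
    rw [hP₃, map_sub, Polynomial.aeval_map_algebraMap, Polynomial.aeval_C,
      IntermediateField.algebraMap_apply, haevalX q₃]
    exact sub_self _
  have hpdvdP₂ : minpoly F (RatFunc.X : RatFunc ℂ) ∣ P₂ := minpoly.dvd F _ haevalP₂
  have hpdvdP₃ : minpoly F (RatFunc.X : RatFunc ℂ) ∣ P₃ := minpoly.dvd F _ haevalP₃
  -- splitting of Pn over RatFunc ℂ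
  have hprim : IsPrimitiveRoot (Complex.exp (2 * Real.pi * Complex.I / n)) n :=
    Complex.isPrimitiveRoot_exp n hnpos.ne'
  have hinj : Function.Injective (algebraMap ℂ (RatFunc ℂ)) :=
    (algebraMap ℂ (RatFunc ℂ)).injective
  have hprimK := hprim.map_of_injective hinj
  have hcardroots : Multiset.card
      ((Polynomial.X ^ n - Polynomial.C ((RatFunc.X : RatFunc ℂ) ^ n)).roots) = n := by
    have h := hprimK.card_nthRoots ((RatFunc.X : RatFunc ℂ) ^ n)
    rw [if_pos ⟨RatFunc.X, rfl⟩] at h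
    simpa [Polynomial.nthRoots] using h
  have hPnmap : Pn.map (algebraMap F (RatFunc ℂ))
      = Polynomial.X ^ n - Polynomial.C ((RatFunc.X : RatFunc ℂ) ^ n) := by
    rw [hPn]
    simp [Polynomial.map_sub, Polynomial.map_pow, Polynomial.map_X, Polynomial.map_C,
      IntermediateField.algebraMap_apply, hx₀]
  have hmapsplits : Polynomial.Splits
      (Pn.map (algebraMap F (RatFunc ℂ))) := by
    rw [hPnmap, Polynomial.splits_iff_card_roots, hcardroots,
      Polynomial.natDegree_X_pow_sub_C]
  have hsplitsPn : Polynomial.Splits (Pn.map (algebraMap F (RatFunc ℂ))) := hmapsplits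
  have hsplitsp : Polynomial.Splits
      ((minpoly F (RatFunc.X : RatFunc ℂ)).map (algebraMap F (RatFunc ℂ))) :=
    hsplitsPn.of_dvd (Polynomial.map_ne_zero hPnmonic.ne_zero) (Polynomial.map_dvd _ hpdvdPn)
  -- every root of the minimal polynomial equals X
  have hroots : ∀ ρ ∈ ((minpoly F (RatFunc.X : RatFunc ℂ)).map
      (algebraMap F (RatFunc ℂ))).roots, ρ = RatFunc.X := by
    intro ρ hρ
    have hρ0 : Polynomial.aeval ρ (minpoly F (RatFunc.X : RatFunc ℂ)) = 0 := by
      have h := Polynomial.isRoot_of_mem_roots hρ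
      rwa [Polynomial.IsRoot, Polynomial.eval_map, ← Polynomial.aeval_def] at h
    have haux : ∀ P : Polynomial F, minpoly F (RatFunc.X : RatFunc ℂ) ∣ P →
        Polynomial.aeval ρ P = 0 := by
      rintro P ⟨c, rfl⟩
      rw [map_mul, hρ0, zero_mul]
    have hρn : ρ ^ n = (RatFunc.X : RatFunc ℂ) ^ n := by
      have h := haux Pn hpdvdPn
      rw [hPn] at h
      simp only [map_sub, map_pow, Polynomial.aeval_X, Polynomial.aeval_C,
        IntermediateField.algebraMap_apply] at h
      exact sub_eq_zero.mp h
    have haeq₂ : Polynomial.aeval ρ q₂ = algebraMap (Polynomial ℂ) (RatFunc ℂ) q₂ := by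
      have h := haux P₂ hpdvdP₂
      rw [hP₂, map_sub, Polynomial.aeval_map_algebraMap, Polynomial.aeval_C,
        IntermediateField.algebraMap_apply] at h
      exact sub_eq_zero.mp h
    have haeq₃ : Polynomial.aeval ρ q₃ = algebraMap (Polynomial ℂ) (RatFunc ℂ) q₃ := by
      have h := haux P₃ hpdvdP₃
      rw [hP₃, map_sub, Polynomial.aeval_map_algebraMap, Polynomial.aeval_C,
        IntermediateField.algebraMap_apply] at h
      exact sub_eq_zero.mp h
    have hXne : (RatFunc.X : RatFunc ℂ) ≠ 0 := RatFunc.X_ne_zero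
    have hu : (ρ / RatFunc.X) ^ n = 1 := by
      rw [div_pow, hρn, div_self (pow_ne_zero n hXne)]
    obtain ⟨ζ, hζn, hζeq⟩ := aux_root_of_unity hnpos.ne' hu
    have hρeq : ρ = algebraMap ℂ (RatFunc ℂ) ζ * RatFunc.X := by
      rw [← hζeq]
      field_simp
    have hd2 := aux_order_dvd n₂ hn₂ n υ₂ hdvd2 hnpos hυ₂ ℓ₂ e₂ he₂mono he₂pos he₂le
      hgcd₂ m₂ a₂ ha₂ q₂ hq₂ ζ hζn (by rw [← hρeq]; exact haeq₂)
    have hd3 := aux_order_dvd n₃ hn₃ n υ₃ hdvd3 hnpos hυ₃ ℓ₃ e₃ he₃mono he₃pos he₃le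
      hgcd₃ m₃ a₃ ha₃ q₃ hq₃ ζ hζn (by rw [← hρeq]; exact haeq₃)
    have hcop : Nat.gcd υ₂ υ₃ = 1 := by
      rw [hυ₂, hυ₃, hn]; exact aux_lcm_div_coprime n₂ n₃ hn₂ hn₃
    have hζ1 : ζ = 1 := orderOf_eq_one_iff.mp
      (Nat.dvd_one.mp (hcop ▸ Nat.dvd_gcd hd2 hd3))
    rw [hρeq, hζ1, map_one, one_mul]
  -- counting roots
  have hsep : (minpoly F (RatFunc.X : RatFunc ℂ)).Separable :=
    (minpoly.irreducible hint).separable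
  have hnodup := Polynomial.nodup_roots (hsep.map (f := algebraMap F (RatFunc ℂ)))
  have hpne : minpoly F (RatFunc.X : RatFunc ℂ) ≠ 0 := minpoly.ne_zero hint
  have hmapne : (minpoly F (RatFunc.X : RatFunc ℂ)).map (algebraMap F (RatFunc ℂ)) ≠ 0 :=
    Polynomial.map_ne_zero hpne
  have hXmem : (RatFunc.X : RatFunc ℂ) ∈ ((minpoly F (RatFunc.X : RatFunc ℂ)).map
      (algebraMap F (RatFunc ℂ))).roots := by
    rw [Polynomial.mem_roots hmapne, Polynomial.IsRoot, Polynomial.eval_map,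
      ← Polynomial.aeval_def]
    exact minpoly.aeval F _
  have hcount := Multiset.count_eq_card.mpr (fun x hx => (hroots x hx).symm)
  have hle1 := Multiset.nodup_iff_count_le_one.mp hnodup (RatFunc.X : RatFunc ℂ)
  have hge1 : 1 ≤ Multiset.count (RatFunc.X : RatFunc ℂ)
      ((minpoly F (RatFunc.X : RatFunc ℂ)).map (algebraMap F (RatFunc ℂ))).roots :=
    Multiset.one_le_count_iff_mem.mpr hXmem
  have hdeg := hsplitsp.natDegree_eq_card_roots
  rw [Polynomial.natDegree_map] at hdeg
  have hdeg1 : (minpoly F (RatFunc.X : RatFunc ℂ)).natDegree = 1 := by omega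
  have hmonic := minpoly.monic hint
  have hp1 := hmonic.eq_X_add_C hdeg1
  have h0 := minpoly.aeval F (RatFunc.X : RatFunc ℂ)
  rw [hp1] at h0
  simp only [map_add, Polynomial.aeval_X, Polynomial.aeval_C] at h0
  have hXeq : (RatFunc.X : RatFunc ℂ) = algebraMap F (RatFunc ℂ)
      (-((minpoly F (RatFunc.X : RatFunc ℂ)).coeff 0)) := by
    rw [map_neg]
    exact eq_neg_of_add_eq_zero_left h0
  rw [hXeq, IntermediateField.algebraMap_apply]
  exact SetLike.coe_mem _
end

section
/- Let N ∈ ℕ, M > 0, and for k = 2, 3 let d_k ∈ ℕ and coefficients (c_{j,k})_{j∈ℕ} ⊆ ℂ be such that the function r_k(t) := Σ_{j=0}^∞ c_{j,k} t^{d_k − j} is given near infinity (for |t| > M) by this convergent series. Let q_k(t) := Σ_{j=0}^{d_k} c_{j,k} t^{d_k − j} be the polynomial truncation retaining exactly the terms with non-negative exponents. Then ‖(r₂(t), r₃(t)) − (q₂(t), q₃(t))‖ tends to 0 as |t| → ∞; consequently, for any set C ⊆ ℂ³ containing the branch points (t^N, r₂(t), r₃(t)) for all |t| > M, the infimum distance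 Metric.infDist ((t^N, q₂(t), q₃(t))) C tends to 0 as |t| → ∞, i.e., the curve parametrized by Q̃(t) = (t^N, q₂(t), q₃(t)) and the curve containing the branch approach each other at infinity. -/
/-- The point `(a, b)` of `ℂ²` with the Euclidean norm. -/
noncomputable def vec2 (a b : ℂ) : EuclideanSpace ℂ (Fin 2) :=
  (WithLp.equiv 2 (Fin 2 → ℂ)).symm ![a, b]

/-- The point `(a, b, c)` of `ℂ³` with the Euclidean norm. -/
noncomputable def vec3 (a b c : ℂ) : EuclideanSpace ℂ (Fin 3) :=
  (WithLp.equiv 2 (Fin 3 → ℂ)).symm ![a, b, c]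


lemma vec2_sub (a b a' b' : ℂ) : vec2 a b - vec2 a' b' = vec2 (a - a') (b - b') := by
  ext i
  fin_cases i <;> simp [vec2]

lemma vec3_sub (a b c a' b' c' : ℂ) :
    vec3 a b c - vec3 a' b' c' = vec3 (a - a') (b - b') (c - c') := by
  ext i
  fin_cases i <;> simp [vec3]

lemma norm_vec2_le (a b : ℂ) : ‖vec2 a b‖ ≤ ‖a‖ + ‖b‖ := by
  rw [EuclideanSpace.norm_eq]
  have h1 : ∑ i : Fin 2, ‖vec2 a b i‖ ^ 2 = ‖a‖ ^ 2 + ‖b‖ ^ 2 := by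
    simp [vec2, Fin.sum_univ_two]
  rw [h1]
  have := Real.sqrt_le_sqrt (show ‖a‖^2 + ‖b‖^2 ≤ (‖a‖ + ‖b‖)^2 by nlinarith [norm_nonneg a, norm_nonneg b])
  calc √(‖a‖^2 + ‖b‖^2) ≤ √((‖a‖+‖b‖)^2) := this
    _ = ‖a‖ + ‖b‖ := Real.sqrt_sq (by positivity)

lemma norm_vec3_le (a b c : ℂ) : ‖vec3 a b c‖ ≤ ‖a‖ + ‖b‖ + ‖c‖ := by
  rw [EuclideanSpace.norm_eq]
  have h1 : ∑ i : Fin 3, ‖vec3 a b c i‖ ^ 2 = ‖a‖ ^ 2 + ‖b‖ ^ 2 + ‖c‖ ^ 2 := by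
    simp [vec3, Fin.sum_univ_three]
  rw [h1]
  have := Real.sqrt_le_sqrt (show ‖a‖^2 + ‖b‖^2 + ‖c‖^2 ≤ (‖a‖ + ‖b‖ + ‖c‖)^2 by
    nlinarith [norm_nonneg a, norm_nonneg b, norm_nonneg c])
  calc √(‖a‖^2 + ‖b‖^2 + ‖c‖^2) ≤ √((‖a‖+‖b‖+‖c‖)^2) := this
    _ = ‖a‖ + ‖b‖ + ‖c‖ := Real.sqrt_sq (by positivity)

/-- The filter of complex numbers of arbitrarily large modulus. -/
noncomputable def atComplexInfinity : Filter ℂ := Filter.comap (fun z : ℂ => ‖z‖) Filter.atTop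

lemma abs_tendsto_atTop : Filter.Tendsto (fun z : ℂ => ‖z‖) atComplexInfinity Filter.atTop :=
  Filter.tendsto_comap

lemma tail_tendsto (M : ℝ) (hM : 0 < M) (d : ℕ) (c : ℕ → ℂ) (g : ℂ → ℂ)
    (hg : SeriesAt g M (d : ℤ) c) :
    Filter.Tendsto (fun t : ℂ => ‖g t - ∑ j ∈ Finset.range (d + 1), c j * t ^ (d - j)‖)
      atComplexInfinity (nhds 0) := by
  set t₀ : ℂ := ((M + 1 : ℝ) : ℂ) with ht₀def
  have ht₀ : ‖t₀‖ = M + 1 := by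
    rw [ht₀def, Complex.norm_of_nonneg (by linarith : (0:ℝ) ≤ M + 1)]
  have hMt₀ : M < ‖t₀‖ := by rw [ht₀]; linarith
  have hS := hg t₀ hMt₀
  -- terms at t₀ tend to 0
  have hterm : Filter.Tendsto (fun n => c n * t₀ ^ ((d : ℤ) - n)) Filter.atTop (nhds 0) := by
    have h1 := hS.comp (Filter.tendsto_add_atTop_nat 1)
    have h2 := h1.sub hS
    simpa [Finset.sum_range_succ] using h2
  obtain ⟨K, hK⟩ := hterm.norm.bddAbove_range
  have hK' : ∀ n : ℕ, ‖c n‖ * (M + 1) ^ ((d : ℤ) - n) ≤ K := by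
    intro n
    have := hK (Set.mem_range_self n)
    simpa [norm_mul, norm_zpow, ht₀] using this
  have hKnn : 0 ≤ K := le_trans (by positivity) (hK' 0)
  have hM1 : (0:ℝ) < M + 1 := by linarith
  have hcj : ∀ j : ℕ, ‖c j‖ ≤ K * (M + 1) ^ ((j : ℤ) - d) := by
    intro j
    have hpos : (0:ℝ) < (M + 1) ^ ((j : ℤ) - d) := zpow_pos hM1 _
    calc ‖c j‖ = ‖c j‖ * (M + 1) ^ ((d : ℤ) - j) * (M + 1) ^ ((j : ℤ) - d) := by
          rw [mul_assoc, ← zpow_add₀ (ne_of_gt hM1)]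
          simp
      _ ≤ K * (M + 1) ^ ((j : ℤ) - d) := by
          exact mul_le_mul_of_nonneg_right (hK' j) hpos.le
  -- the per-t bound
  have key : ∀ t : ℂ, 2 * (M + 1) ≤ ‖t‖ →
      ‖g t - ∑ j ∈ Finset.range (d + 1), c j * t ^ (d - j)‖
        ≤ 2 * K * ((M + 1) / ‖t‖) := by
    intro t ht
    have habs : (0:ℝ) < ‖t‖ := by linarith
    have hMt : M < ‖t‖ := by linarith
    set ρ : ℝ := (M + 1) / ‖t‖ with hρdef
    have hρpos : 0 < ρ := by positivity
    have hρle : ρ ≤ 1 / 2 := by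
      rw [hρdef, div_le_div_iff₀ habs (by norm_num)]
      linarith
    -- rewrite q with integer exponents
    have hq : (∑ j ∈ Finset.range (d + 1), c j * t ^ (d - j))
        = ∑ j ∈ Finset.range (d + 1), c j * t ^ ((d : ℤ) - j) := by
      apply Finset.sum_congr rfl
      intro j hj
      have hjd : j ≤ d := Nat.lt_succ_iff.mp (Finset.mem_range.mp hj)
      have hcast : (d : ℤ) - j = ((d - j : ℕ) : ℤ) := by omega
      rw [hcast, zpow_natCast]
    rw [hq]
    have hlim : Filter.Tendsto
        (fun n => ‖(∑ j ∈ Finset.range n, c j * t ^ ((d:ℤ) - j))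
          - ∑ j ∈ Finset.range (d + 1), c j * t ^ ((d : ℤ) - j)‖)
        Filter.atTop (nhds ‖g t - ∑ j ∈ Finset.range (d + 1), c j * t ^ ((d : ℤ) - j)‖) :=
      ((hg t hMt).sub_const _).norm
    apply le_of_tendsto hlim
    filter_upwards [Filter.eventually_ge_atTop (d + 1)] with n hn
    rw [← Finset.sum_Ico_eq_sub _ hn]
    calc ‖∑ j ∈ Finset.Ico (d + 1) n, c j * t ^ ((d:ℤ) - j)‖
        ≤ ∑ j ∈ Finset.Ico (d + 1) n, ‖c j * t ^ ((d:ℤ) - j)‖ := norm_sum_le _ _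
      _ ≤ ∑ j ∈ Finset.Ico (d + 1) n, K * ρ * (1/2) ^ (j - (d+1)) := by
          apply Finset.sum_le_sum
          intro j hj
          obtain ⟨hj1, hj2⟩ := Finset.mem_Ico.mp hj
          set m : ℕ := j - (d + 1) with hmdef
          have hjm : (j : ℤ) = (d : ℤ) + 1 + m := by omega
          have hnorm : ‖c j * t ^ ((d:ℤ) - j)‖ = ‖c j‖ * ‖t‖ ^ ((d:ℤ) - j) := by
            simp [norm_mul, norm_zpow]
          rw [hnorm]
          have hstep : ‖c j‖ * ‖t‖ ^ ((d:ℤ) - j)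
              ≤ K * (M + 1) ^ ((j:ℤ) - d) * ‖t‖ ^ ((d:ℤ) - j) :=
            mul_le_mul_of_nonneg_right (hcj j) (zpow_pos habs _).le
          refine hstep.trans ?_
          have heq : K * (M + 1) ^ ((j:ℤ) - d) * ‖t‖ ^ ((d:ℤ) - j)
              = K * ρ ^ (m + 1) := by
            rw [hρdef, div_pow]
            rw [show (j:ℤ) - d = ((m + 1 : ℕ) : ℤ) by omega,
                show (d:ℤ) - j = -((m + 1 : ℕ) : ℤ) by omega]
            rw [zpow_natCast, zpow_neg, zpow_natCast]
            field_simp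
          rw [heq]
          have : ρ ^ (m + 1) ≤ ρ * (1/2) ^ m := by
            rw [pow_succ']
            exact mul_le_mul_of_nonneg_left (pow_le_pow_left₀ hρpos.le hρle m) hρpos.le
          calc K * ρ ^ (m + 1) ≤ K * (ρ * (1/2) ^ m) :=
                mul_le_mul_of_nonneg_left this hKnn
            _ = K * ρ * (1/2) ^ m := by ring
      _ = K * ρ * ∑ j ∈ Finset.Ico (d + 1) n, (1/2 : ℝ) ^ (j - (d+1)) := by
          rw [Finset.mul_sum]
      _ ≤ K * ρ * 2 := by
          apply mul_le_mul_of_nonneg_left _ (by positivity)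
          rw [Finset.sum_Ico_eq_sum_range]
          simp only [Nat.add_sub_cancel_left]
          have : ∑ i ∈ Finset.range (n - (d+1)), ((1:ℝ)/2) ^ i
              ≤ ∑' i : ℕ, ((1:ℝ)/2) ^ i := by
            apply Summable.sum_le_tsum _ (fun i _ => by positivity)
            exact summable_geometric_of_lt_one (by norm_num) (by norm_num)
          refine this.trans ?_
          rw [tsum_geometric_of_lt_one (by norm_num) (by norm_num)]
          norm_num
      _ = 2 * K * ρ := by ring
  -- conclude by squeezing
  have hbound : Filter.Tendsto (fun t : ℂ => 2 * K * ((M + 1) / ‖t‖))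
      atComplexInfinity (nhds 0) := by
    have h1 : Filter.Tendsto (fun t : ℂ => ‖t‖⁻¹) atComplexInfinity (nhds 0) :=
      tendsto_inv_atTop_zero.comp abs_tendsto_atTop
    have := (h1.const_mul (2 * K * (M + 1)))
    simpa [div_eq_mul_inv, mul_assoc] using this
  apply squeeze_zero' (Filter.Eventually.of_forall (fun t => norm_nonneg _)) _ hbound
  filter_upwards [abs_tendsto_atTop.eventually (Filter.eventually_ge_atTop (2 * (M + 1)))] with t ht
  exact key t ht

/-- If `r₂, r₃` are given near infinity by series `Σ_{j} c_{j,k} t^{d_k−j}` and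
`q_k(t) = Σ_{j=0}^{d_k} c_{j,k} t^{d_k−j}` are their truncations to the terms with
non-negative exponents, then `‖(r₂(t), r₃(t)) − (q₂(t), q₃(t))‖ → 0` as `|t| → ∞`, and
for any set `C ⊆ ℂ³` containing the branch points `(t^N, r₂(t), r₃(t))` for `|t| > M`,
the infimum distance from `(t^N, q₂(t), q₃(t))` to `C` tends to `0` as `|t| → ∞`. -/
theorem stmt_10 (N : ℕ) (M : ℝ) (hM : 0 < M) (d₂ d₃ : ℕ) (c₂ c₃ : ℕ → ℂ)
    (r₂ r₃ : ℂ → ℂ)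
    (hr₂ : SeriesAt r₂ M (d₂ : ℤ) c₂) (hr₃ : SeriesAt r₃ M (d₃ : ℤ) c₃)
    (q₂ q₃ : ℂ → ℂ)
    (hq₂ : q₂ = fun t => ∑ j ∈ Finset.range (d₂ + 1), c₂ j * t ^ (d₂ - j))
    (hq₃ : q₃ = fun t => ∑ j ∈ Finset.range (d₃ + 1), c₃ j * t ^ (d₃ - j)) :
    Filter.Tendsto (fun t => ‖vec2 (r₂ t) (r₃ t) - vec2 (q₂ t) (q₃ t)‖)
        atComplexInfinity (nhds 0) ∧
    ∀ C : Set (EuclideanSpace ℂ (Fin 3)),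
      (∀ t : ℂ, M < ‖t‖ → vec3 (t ^ N) (r₂ t) (r₃ t) ∈ C) →
      Filter.Tendsto (fun t => Metric.infDist (vec3 (t ^ N) (q₂ t) (q₃ t)) C)
        atComplexInfinity (nhds 0) := by
  subst hq₂ hq₃
  have h2 := tail_tendsto M hM d₂ c₂ r₂ hr₂
  have h3 := tail_tendsto M hM d₃ c₃ r₃ hr₃
  have hsum : Filter.Tendsto
      (fun t : ℂ => ‖r₂ t - ∑ j ∈ Finset.range (d₂ + 1), c₂ j * t ^ (d₂ - j)‖
        + ‖r₃ t - ∑ j ∈ Finset.range (d₃ + 1), c₃ j * t ^ (d₃ - j)‖)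
      atComplexInfinity (nhds 0) := by
    simpa using h2.add h3
  constructor
  · apply squeeze_zero' (Filter.Eventually.of_forall (fun t => norm_nonneg _)) _ hsum
    apply Filter.Eventually.of_forall
    intro t
    rw [vec2_sub]
    exact norm_vec2_le _ _
  · intro C hC
    apply squeeze_zero' (Filter.Eventually.of_forall (fun t => Metric.infDist_nonneg)) _ hsum
    filter_upwards [abs_tendsto_atTop.eventually (Filter.eventually_gt_atTop M)] with t ht
    have hmem := hC t ht
    calc Metric.infDist
          (vec3 (t ^ N) (∑ j ∈ Finset.range (d₂ + 1), c₂ j * t ^ (d₂ - j))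
            (∑ j ∈ Finset.range (d₃ + 1), c₃ j * t ^ (d₃ - j))) C
        ≤ dist (vec3 (t ^ N) (∑ j ∈ Finset.range (d₂ + 1), c₂ j * t ^ (d₂ - j))
            (∑ j ∈ Finset.range (d₃ + 1), c₃ j * t ^ (d₃ - j)))
            (vec3 (t ^ N) (r₂ t) (r₃ t)) := Metric.infDist_le_dist_of_mem hmem
      _ ≤ ‖r₂ t - ∑ j ∈ Finset.range (d₂ + 1), c₂ j * t ^ (d₂ - j)‖
          + ‖r₃ t - ∑ j ∈ Finset.range (d₃ + 1), c₃ j * t ^ (d₃ - j)‖ := by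
          rw [dist_eq_norm, vec3_sub, sub_self]
          have := norm_vec3_le (0 : ℂ)
            ((∑ j ∈ Finset.range (d₂ + 1), c₂ j * t ^ (d₂ - j)) - r₂ t)
            ((∑ j ∈ Finset.range (d₃ + 1), c₃ j * t ^ (d₃ - j)) - r₃ t)
          simp only [norm_zero, zero_add] at this
          rw [norm_sub_rev (r₂ t), norm_sub_rev (r₃ t)]
          exact this
end
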